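/- Guaranteed writes of adapted binary WOM codes on q-level cells: if a binary WOM code guarantees t writes on binary cells (for any sequence of t messages, there exist cell state vectors in F_2^n that are componentwise nondecreasing and represent the successive messages), then the complement scheme on q-level cells guarantees at least (q-1)t writes. Formally: for any sequence of (q-1)t messages, there exists a sequence of vectors in {0,...,q-1}^n, componentwise nondecreasing, such that the j-th vector reduced modulo 2, after subtracting floor((j-1)/t) * (all-ones) appropriately, represents the j-th message via the binary WOM code, and all entries stay at most q-1. -/
import Mathlib


/-- Complement scheme: a binary WOM code guaranteeing t writes yields, on
q-level cells, at least (q-1)t guaranteed writes; on write j the state is a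
binary codeword shifted up by ⌊j/t⌋·(1,…,1), entries stay ≤ q-1, and states
are componentwise nondecreasing. -/
theorem complement_scheme_guarantee {M : Type*} (n t q : ℕ) (hq : 2 ≤ q)
    (decode : (Fin n → Bool) → M)
    (hguar : ∀ ms : Fin t → M, ∃ c : Fin t → Fin n → Bool,
      (∀ j k : Fin t, j ≤ k → ∀ i, c j i ≤ c k i) ∧ ∀ j, decode (c j) = ms j) :
    ∀ ms : Fin ((q - 1) * t) → M, ∃ S : Fin ((q - 1) * t) → Fin n → ℕ,
      (∀ j k, j ≤ k → ∀ i, S j i ≤ S k i) ∧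
      (∀ j i, S j i ≤ q - 1) ∧
      (∀ j, ∃ bv : Fin n → Bool, decode bv = ms j ∧
        ∀ i, S j i = (if bv i then 1 else 0) + (j : ℕ) / t) := by
  intro ms
  rcases Nat.eq_zero_or_pos t with ht | ht
  · subst ht
    refine ⟨fun j => (Fin.elim0 (Nat.mul_zero (q-1) ▸ j) : Fin n → ℕ), ?_, ?_, ?_⟩ <;>
      intro j <;> exact absurd j.isLt (by simp)
  -- auxiliary facts about indices
  have hdivlt : ∀ j : Fin ((q - 1) * t), (j : ℕ) / t < q - 1 := fun j =>
    (Nat.div_lt_iff_lt_mul ht).2 j.isLt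
  -- choose binary codewords for each block
  have hblock : ∀ m : Fin (q - 1), ∃ c : Fin t → Fin n → Bool,
      (∀ j k : Fin t, j ≤ k → ∀ i, c j i ≤ c k i) ∧
      ∀ r : Fin t, decode (c r) = ms ⟨(m : ℕ) * t + r, by
        have hm : (m : ℕ) ≤ q - 2 := by
          have := m.isLt; omega
        have hr : (r : ℕ) < t := r.isLt
        have : (m : ℕ) * t + r < (m + 1) * t := by
          rw [Nat.succ_mul]; omega
        calc (m : ℕ) * t + r < (m + 1) * t := this
          _ ≤ (q - 1) * t := Nat.mul_le_mul_right t (by omega)⟩ := by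
    intro m
    exact hguar _
  choose c hmono hdec using hblock
  refine ⟨fun j i => (if c ⟨(j : ℕ) / t, hdivlt j⟩ ⟨(j : ℕ) % t, Nat.mod_lt _ ht⟩ i
      then 1 else 0) + (j : ℕ) / t, ?_, ?_, ?_⟩
  · intro j k hjk i
    dsimp only
    have hd : (j : ℕ) / t ≤ (k : ℕ) / t := Nat.div_le_div_right hjk
    rcases lt_or_eq_of_le hd with hd' | hd'
    · have h1 : (if c ⟨(j : ℕ) / t, hdivlt j⟩ ⟨(j : ℕ) % t, Nat.mod_lt _ ht⟩ i
          then 1 else 0) ≤ 1 := by split <;> omega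
      omega
    · have hmd : ((⟨(j : ℕ) / t, hdivlt j⟩ : Fin (q-1)) = ⟨(k : ℕ) / t, hdivlt k⟩) :=
        Fin.ext hd'
      have hr : (j : ℕ) % t ≤ (k : ℕ) % t := by
        have hj := Nat.div_add_mod (j : ℕ) t
        have hk := Nat.div_add_mod (k : ℕ) t
        rw [← hd'] at hk
        have hjk' : (j : ℕ) ≤ (k : ℕ) := hjk
        omega
      have hb := hmono ⟨(k : ℕ) / t, hdivlt k⟩ ⟨(j : ℕ) % t, Nat.mod_lt _ ht⟩
        ⟨(k : ℕ) % t, Nat.mod_lt _ ht⟩ hr i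
      rw [hmd, hd']
      have h2 : (if c ⟨(k : ℕ) / t, hdivlt k⟩ ⟨(j : ℕ) % t, Nat.mod_lt _ ht⟩ i
          then 1 else 0) ≤ (if c ⟨(k : ℕ) / t, hdivlt k⟩ ⟨(k : ℕ) % t, Nat.mod_lt _ ht⟩ i
          then (1:ℕ) else 0) := by
        rcases Bool.le_iff_imp.1 hb with h
        split <;> split <;> simp_all
      omega
  · intro j i
    dsimp only
    have := hdivlt j
    split <;> omega
  · intro j
    refine ⟨c ⟨(j : ℕ) / t, hdivlt j⟩ ⟨(j : ℕ) % t, Nat.mod_lt _ ht⟩, ?_, fun i => rfl⟩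
    rw [hdec]
    congr 1
    exact Fin.ext (by simpa using Nat.div_add_mod' (j : ℕ) t)
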